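/- Every equilibrium distribution is Pareto efficient. -/

import Mathlib

open Finset

/-- Leontief utility: minimum of `δ x / v x` over charities with positive weight. -/
noncomputable def leontief {A : Type*} [Fintype A] (v : A → ℝ)
    (h : (Finset.univ.filter fun x => 0 < v x).Nonempty) (δ : A → ℝ) : ℝ :=
  (Finset.univ.filter fun x => 0 < v x).inf' h fun x => δ x / v x

theorem stmt_6 {N A : Type*} [Fintype N] [Fintype A]
    (C : N → ℝ) (hC : ∀ i, 0 ≤ C i)
    (v : N → A → ℝ) (hv : ∀ i x, 0 ≤ v i x)
    (hAi : ∀ i, (Finset.univ.filter fun x => 0 < v i x).Nonempty)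
    (δ : A → ℝ) (hδ : ∀ x, 0 ≤ δ x) (hsum : ∑ x, δ x = ∑ i, C i)
    -- δ is in equilibrium:
    (heq : ∃ δi : N → A → ℝ, (∀ i x, 0 ≤ δi i x) ∧ (∀ x, ∑ i, δi i x = δ x) ∧
        (∀ i, ∑ x, δi i x = C i) ∧
        (∀ i, ∀ δi' : A → ℝ, (∀ x, 0 ≤ δi' x) → (∑ x, δi' x = C i) →
          leontief (v i) (hAi i) (fun x => δ x - δi i x + δi' x) ≤ leontief (v i) (hAi i) δ)) :
    -- then δ is Pareto efficient:
    ¬ ∃ δ' : A → ℝ, (∀ x, 0 ≤ δ' x) ∧ (∑ x, δ' x = ∑ i, C i) ∧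
        (∀ i, leontief (v i) (hAi i) δ ≤ leontief (v i) (hAi i) δ') ∧
        (∃ i, leontief (v i) (hAi i) δ < leontief (v i) (hAi i) δ') := by
  classical
  rintro ⟨δ', hδ'0, hδ'sum, hge, i0, hlt⟩
  obtain ⟨δi, hδi0, hδiδ, hδiC, hbr⟩ := heq
  -- Step 1: at equilibrium an agent only donates to her minimizing charities.
  have step1 : ∀ i x, 0 < δi i x →
      0 < v i x ∧ δ x = leontief (v i) (hAi i) δ * v i x := by
    intro i x0 hx0
    by_contra hcon
    set u := leontief (v i) (hAi i) δ with hu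
    set S := (Finset.univ.filter fun x => 0 < v i x) with hS
    have hSne : S.Nonempty := hAi i
    set T := S.filter (fun x => δ x / v i x = u) with hT
    have hTne : T.Nonempty := by
      obtain ⟨x, hxS, hxu⟩ := Finset.exists_mem_eq_inf' hSne (fun x => δ x / v i x)
      exact ⟨x, Finset.mem_filter.mpr ⟨hxS, hxu.symm⟩⟩
    have hTcard : (0:ℝ) < (T.card : ℝ) := by exact_mod_cast Finset.card_pos.mpr hTne
    have hle : ∀ x ∈ S, u ≤ δ x / v i x := fun x hx => Finset.inf'_le _ hx
    have hx0T : x0 ∉ T := by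
      intro hmem
      have h1 := Finset.mem_filter.mp hmem
      have h2 := Finset.mem_filter.mp h1.1
      exact hcon ⟨h2.2, ((div_eq_iff h2.2.ne').mp h1.2)⟩
    obtain ⟨ε, hε0, hεle, hεx0⟩ : ∃ ε : ℝ, 0 < ε ∧ ε ≤ δi i x0 ∧
        (0 < v i x0 → u * v i x0 < δ x0 - ε) := by
      by_cases hv0 : 0 < v i x0
      · have hxS : x0 ∈ S := Finset.mem_filter.mpr ⟨Finset.mem_univ _, hv0⟩
        have hgt : u < δ x0 / v i x0 := by
          refine lt_of_le_of_ne (hle x0 hxS) fun h => hx0T ?_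
          exact Finset.mem_filter.mpr ⟨hxS, h.symm⟩
        have hgap : 0 < δ x0 - u * v i x0 := by
          have := (lt_div_iff₀ hv0).mp hgt; linarith
        refine ⟨min (δi i x0) ((δ x0 - u * v i x0)/2), lt_min hx0 (by linarith),
          min_le_left _ _, fun _ => ?_⟩
        have : min (δi i x0) ((δ x0 - u * v i x0)/2) ≤ (δ x0 - u * v i x0)/2 :=
          min_le_right _ _
        linarith
      · exact ⟨δi i x0, hx0, le_refl _, fun h => absurd h hv0⟩
    set δi' : A → ℝ := fun x =>
      δi i x - (if x = x0 then ε else 0) + (if x ∈ T then ε / T.card else 0) with hδi'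
    have hnn : ∀ x, 0 ≤ δi' x := by
      intro x
      by_cases hxx : x = x0
      · rw [hxx]
        have h2 : δi' x0 = δi i x0 - ε := by simp [hδi', hx0T]
        rw [h2]; linarith
      · have h1 : (0:ℝ) ≤ if x ∈ T then ε / (T.card : ℝ) else 0 := by
          by_cases hxT : x ∈ T
          · rw [if_pos hxT]; exact le_of_lt (div_pos hε0 hTcard)
          · rw [if_neg hxT]
        have h2 : δi' x = δi i x + (if x ∈ T then ε / (T.card : ℝ) else 0) := by
          simp [hδi', hxx]
        rw [h2]
        have := hδi0 i x
        linarith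
    have hsum' : ∑ x, δi' x = C i := by
      simp only [hδi']
      rw [Finset.sum_add_distrib, Finset.sum_sub_distrib]
      rw [Finset.sum_ite_eq' Finset.univ x0 (fun _ => ε)]
      rw [Finset.sum_ite_mem, Finset.univ_inter, Finset.sum_const, nsmul_eq_mul]
      rw [hδiC i, if_pos (Finset.mem_univ x0)]
      have hc : ((T.card : ℝ)) ≠ 0 := ne_of_gt hTcard
      field_simp
      ring
    have hlt' : u < leontief (v i) (hAi i) (fun x => δ x - δi i x + δi' x) := by
      unfold leontief
      rw [Finset.lt_inf'_iff]
      intro x hxS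
      have hvx : 0 < v i x := (Finset.mem_filter.mp hxS).2
      rw [lt_div_iff₀ hvx]
      show u * v i x < δ x - δi i x + δi' x
      have hnum : δ x - δi i x + δi' x
          = δ x - (if x = x0 then ε else 0) + (if x ∈ T then ε / T.card else 0) := by
        simp only [hδi']; ring
      rw [hnum]
      by_cases hxT : x ∈ T
      · have hxne : x ≠ x0 := fun h => hx0T (h ▸ hxT)
        rw [if_neg hxne, if_pos hxT]
        have h1 : u * v i x ≤ δ x := by
          have := (le_div_iff₀ hvx).mp (hle x hxS); linarith
        have h2 : 0 < ε / (T.card : ℝ) := div_pos hε0 hTcard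
        linarith
      · by_cases hxx : x = x0
        · subst hxx
          rw [if_pos rfl, if_neg hxT]
          have := hεx0 hvx
          linarith
        · rw [if_neg hxx, if_neg hxT]
          have hne : δ x / v i x ≠ u := fun h => hxT (Finset.mem_filter.mpr ⟨hxS, h⟩)
          have : u < δ x / v i x := lt_of_le_of_ne (hle x hxS) (Ne.symm hne)
          have := (lt_div_iff₀ hvx).mp this
          linarith
    exact absurd (hbr i δi' hnn hsum') (not_le.mpr hlt')
  -- Step 2: δ' pointwise dominates δ.
  have step2 : ∀ x, δ x ≤ δ' x := by
    intro x
    rcases eq_or_lt_of_le (hδ x) with h | h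
    · exact h ▸ hδ'0 x
    · have hsne : (∑ i, δi i x) ≠ 0 := by rw [hδiδ x]; exact h.ne'
      obtain ⟨i, _, hine⟩ := Finset.exists_ne_zero_of_sum_ne_zero hsne
      have hipos : 0 < δi i x := lt_of_le_of_ne (hδi0 i x) (Ne.symm hine)
      obtain ⟨hvx, hδx⟩ := step1 i x hipos
      have h1 : leontief (v i) (hAi i) δ * v i x ≤ leontief (v i) (hAi i) δ' * v i x :=
        mul_le_mul_of_nonneg_right (hge i) (hv i x)
      have h2 : leontief (v i) (hAi i) δ' ≤ δ' x / v i x := by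
        unfold leontief
        exact Finset.inf'_le (fun y => δ' y / v i y)
          (Finset.mem_filter.mpr ⟨Finset.mem_univ x, hvx⟩)
      have h3 : leontief (v i) (hAi i) δ' * v i x ≤ δ' x := by
        have := (le_div_iff₀ hvx).mp h2; linarith
      linarith [hδx ▸ (h1.trans h3)]
  -- Step 3: equal sums force δ' = δ, contradiction.
  have hzero : ∀ x ∈ Finset.univ, δ' x - δ x = 0 := by
    rw [← Finset.sum_eq_zero_iff_of_nonneg (fun x _ => sub_nonneg.mpr (step2 x))]
    rw [Finset.sum_sub_distrib, hδ'sum, hsum, sub_self]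
  have hfun : δ' = δ := funext fun x => by
    have := hzero x (Finset.mem_univ x); linarith
  rw [hfun] at hlt
  exact lt_irrefl _ hlt
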